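/- arXiv:1212.1404 — 6 statements merged into one kernel-verified Lean document; each statement's English description precedes it below -/
import Mathlib

section
/- Let A = D[y; δ] be an Ore extension of a commutative ring D by a derivation δ, and let f ∈ D. Then the principal ideal (f) of D is δ-invariant if and only if f is a normal element of A, i.e., fA = Af. -/
/-- In an Ore extension `A = D[y; δ]` of a commutative ring `D` by a derivation `δ`,
the principal ideal `(f)` is `δ`-invariant iff `f` is a normal element of `A`
(`fA = Af`). -/
theorem stmt6 {D A : Type*} [CommRing D] [Ring A]
    (δ : D → D) (hadd : ∀ a b, δ (a + b) = δ a + δ b)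
    (hleib : ∀ a b, δ (a * b) = δ a * b + a * δ b)
    (i : D →+* A) (y : A)
    (hrel : ∀ r : D, y * i r = i r * y + i (δ r))
    (hbasis : Function.Bijective fun c : ℕ →₀ D => c.sum fun n d => i d * y ^ n)
    (f : D) :
    (∀ r ∈ Ideal.span {f}, δ r ∈ Ideal.span {f}) ↔
      {x : A | ∃ a : A, x = i f * a} = {x : A | ∃ a : A, x = a * i f} := by
  constructor
  · intro h
    have hf : δ f ∈ Ideal.span {f} := h f (Ideal.mem_span_singleton_self f)
    obtain ⟨c, hc⟩ := (Ideal.mem_span_singleton).mp hf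
    -- hc : δ f = f * c
    have hcomm : ∀ d : D, i f * i d = i d * i f := by
      intro d; rw [← map_mul, ← map_mul, mul_comm]
    have key1 : i f * y = (y - i c) * i f := by
      have h1 := hrel f
      have h2 : i (δ f) = i c * i f := by rw [hc, mul_comm f c, map_mul]
      rw [h2] at h1
      rw [sub_mul, h1, add_sub_cancel_right]
    have key2 : y * i f = i f * (y + i c) := by
      rw [hrel f, mul_add]
      congr 1
      rw [← map_mul, ← hc]
    have K1 : ∀ n : ℕ, i f * y ^ n = (y - i c) ^ n * i f := by
      intro n
      induction n with
      | zero => simp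
      | succ n ih =>
        rw [pow_succ, ← mul_assoc, ih, mul_assoc, key1, ← mul_assoc, ← pow_succ]
    have K2 : ∀ n : ℕ, y ^ n * i f = i f * (y + i c) ^ n := by
      intro n
      induction n with
      | zero => simp
      | succ n ih =>
        rw [pow_succ', mul_assoc, ih, ← mul_assoc, key2, mul_assoc, ← pow_succ']
    ext x
    simp only [Set.mem_setOf_eq]
    constructor
    · rintro ⟨a, rfl⟩
      obtain ⟨c', rfl⟩ := hbasis.2 a
      refine ⟨c'.sum fun n d => i d * (y - i c) ^ n, ?_⟩
      simp only
      rw [Finsupp.mul_sum, Finsupp.sum_mul]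
      refine Finsupp.sum_congr fun n _ => ?_
      rw [← mul_assoc, hcomm, mul_assoc, K1 n, ← mul_assoc]
    · rintro ⟨a, rfl⟩
      obtain ⟨c', rfl⟩ := hbasis.2 a
      refine ⟨c'.sum fun n d => i d * (y + i c) ^ n, ?_⟩
      simp only
      rw [Finsupp.sum_mul, Finsupp.mul_sum]
      refine Finsupp.sum_congr fun n _ => ?_
      rw [mul_assoc, K2 n, ← mul_assoc, ← hcomm, mul_assoc]
  · intro h
    -- first extract δ f = f * (c' 0)
    have hmem : y * i f ∈ {x : A | ∃ a : A, x = i f * a} := by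
      rw [h]; exact ⟨y, rfl⟩
    obtain ⟨a, ha⟩ := hmem
    have hδ : i (δ f) = i f * (a - y) := by
      have h1 := hrel f
      rw [ha] at h1
      rw [mul_sub, h1, add_sub_cancel_left]
    obtain ⟨c', hc'⟩ := hbasis.2 (a - y)
    simp only at hc'
    have e1 : (f • c').sum (fun n d => i d * y ^ n) = i (δ f) := by
      rw [Finsupp.sum_smul_index (fun n => by simp)]
      rw [hδ, ← hc', Finsupp.mul_sum]
      refine Finsupp.sum_congr fun n _ => ?_
      rw [map_mul, mul_assoc]
    have e2 : (Finsupp.single 0 (δ f)).sum (fun n d => i d * y ^ n) = i (δ f) := by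
      rw [Finsupp.sum_single_index (by simp)]
      simp
    have e3 : f • c' = Finsupp.single 0 (δ f) := hbasis.1 (by simp only; rw [e1, e2])
    have hδf : δ f = f * c' 0 := by
      have := DFunLike.congr_fun e3 0
      simp only [Finsupp.smul_apply, smul_eq_mul, Finsupp.single_eq_same] at this
      exact this.symm
    intro r hr
    obtain ⟨d, rfl⟩ := (Ideal.mem_span_singleton).mp hr
    refine (Ideal.mem_span_singleton).mpr ⟨c' 0 * d + δ d, ?_⟩
    rw [hleib, hδf]
    ring
end

section
/- Let F be a field of characteristic 0, h ∈ F[x] a nonzero polynomial, and A_h the F-algebra generated by x, y with relation yx − xy = h. If J is a nonzero two-sided ideal of A_h, then J ∩ F[x] ≠ 0. -/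
open Polynomial

/-- Char 0, `h ≠ 0`: every nonzero two-sided ideal of `A_h = F[x][y; δ]`
(`δ(r) = r′h`) meets `F[x]` nontrivially. -/
theorem stmt7 {F A : Type*} [Field F] [CharZero F] [Ring A] [Algebra F A]
    (h : Polynomial F) (hh : h ≠ 0)
    (i : Polynomial F →ₐ[F] A) (y : A)
    (hrel : ∀ r : Polynomial F, y * i r = i r * y + i (derivative r * h))
    (hbasis : Function.Bijective fun c : ℕ →₀ Polynomial F =>
      c.sum fun n d => i d * y ^ n)
    (J : TwoSidedIdeal A) (hJ : ∃ a ∈ J, a ≠ (0 : A)) :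
    ∃ r : Polynomial F, r ≠ 0 ∧ i r ∈ J := by
  classical
  obtain ⟨a0, ha0J, ha0⟩ := hJ
  set φ : (ℕ →₀ Polynomial F) → A := fun c => c.sum fun n d => i d * y ^ n with hφdef
  have hbij : Function.Bijective φ := hbasis
  have key0 : ∀ n : ℕ, i (0 : Polynomial F) * y ^ n = 0 := by intro n; simp
  have φ_zero : φ 0 = 0 := Finsupp.sum_zero_index
  have φ_add : ∀ c1 c2, φ (c1 + c2) = φ c1 + φ c2 := by
    intro c1 c2
    simp only [hφdef]
    rw [Finsupp.sum_add_index (fun n _ => key0 n) (fun n _ d1 d2 => by rw [map_add, add_mul])]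
  have φ_single : ∀ (n : ℕ) (d : Polynomial F), φ (Finsupp.single n d) = i d * y ^ n := by
    intro n d
    simp only [hφdef]
    rw [Finsupp.sum_single_index (key0 n)]
  set S : ℕ → AddSubmonoid A := fun m =>
    AddSubmonoid.closure {a | ∃ k, k < m ∧ ∃ d : Polynomial F, a = i d * y ^ k} with hS
  have mem_S : ∀ (m k : ℕ) (d : Polynomial F), k < m → i d * y ^ k ∈ S m := fun m k d hk =>
    AddSubmonoid.subset_closure ⟨k, hk, d, rfl⟩
  have S_mono : ∀ {m m' : ℕ}, m ≤ m' → S m ≤ S m' := by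
    intro m m' hmm'
    apply AddSubmonoid.closure_mono
    rintro a ⟨k, hk, d, rfl⟩
    exact ⟨k, lt_of_lt_of_le hk hmm', d, rfl⟩
  have comm_i : ∀ d e : Polynomial F, i d * i e = i e * i d := by
    intro d e; rw [← map_mul, ← map_mul, mul_comm]
  have ymul : ∀ (d : Polynomial F) (k : ℕ),
      y * (i d * y ^ k) = i d * y ^ (k + 1) + i (derivative d * h) * y ^ k := by
    intro d k
    rw [← mul_assoc, hrel d, add_mul, mul_assoc, ← pow_succ']
  have hyX : y * i X = i X * y + i h := by
    have := hrel X
    rwa [derivative_X, one_mul] at this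
  have yS : ∀ (m : ℕ) (b : A), b ∈ S m → y * b ∈ S (m + 1) := by
    intro m b hb
    induction hb using AddSubmonoid.closure_induction with
    | mem a ha =>
      obtain ⟨k, hk, d, rfl⟩ := ha
      rw [ymul]
      exact add_mem (mem_S _ _ _ (by omega)) (mem_S _ _ _ (by omega))
    | zero => rw [mul_zero]; exact zero_mem _
    | add a b _ _ ha hb => rw [mul_add]; exact add_mem ha hb
  have dS : ∀ (m : ℕ) (e : Polynomial F) (b : A), b ∈ S m → i e * b ∈ S m := by
    intro m e b hb
    induction hb using AddSubmonoid.closure_induction with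
    | mem a ha =>
      obtain ⟨k, hk, d, rfl⟩ := ha
      rw [← mul_assoc, ← map_mul]
      exact mem_S _ _ _ hk
    | zero => rw [mul_zero]; exact zero_mem _
    | add a b _ _ ha hb => rw [mul_add]; exact add_mem ha hb
  have negS : ∀ (m : ℕ) (b : A), b ∈ S m → -b ∈ S m := by
    intro m b hb
    induction hb using AddSubmonoid.closure_induction with
    | mem a ha =>
      obtain ⟨k, hk, d, rfl⟩ := ha
      rw [← neg_mul, ← map_neg]
      exact mem_S _ _ _ hk
    | zero => rw [neg_zero]; exact zero_mem _
    | add a b _ _ ha hb => rw [neg_add]; exact add_mem ha hb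
  have S0 : ∀ b : A, b ∈ S 0 → b = 0 := by
    intro b hb
    induction hb using AddSubmonoid.closure_induction with
    | mem a ha => obtain ⟨k, hk, _⟩ := ha; omega
    | zero => rfl
    | add a b _ _ ha hb => rw [ha, hb, add_zero]
  -- commutator of y^(j+1) with i X
  have Ck : ∀ j : ℕ, ∃ b ∈ S j,
      y ^ (j + 1) * i X - i X * y ^ (j + 1) = (j + 1) • (i h * y ^ j) + b := by
    intro j
    induction j with
    | zero =>
      refine ⟨0, zero_mem _, ?_⟩
      rw [pow_one, pow_zero, mul_one, add_zero, hyX, add_sub_cancel_left]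
      norm_num
    | succ j IH =>
      obtain ⟨b, hbS, hbeq⟩ := IH
      refine ⟨(j + 1) • (i (derivative h * h) * y ^ j) + y * b,
        add_mem (nsmul_mem (mem_S _ _ _ (Nat.lt_succ_self j)) _) (yS _ _ hbS), ?_⟩
      have hrw : y ^ (j + 1) * i X = i X * y ^ (j + 1) + ((j + 1) • (i h * y ^ j) + b) := by
        rw [← hbeq]; abel
      calc y ^ (j + 2) * i X - i X * y ^ (j + 2)
          = y * (y ^ (j + 1) * i X) - i X * (y * y ^ (j + 1)) := by
            rw [pow_succ' y (j + 1), mul_assoc]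
        _ = (y * i X) * y ^ (j + 1) + ((j + 1) • (y * (i h * y ^ j)) + y * b)
              - i X * (y * y ^ (j + 1)) := by
            rw [hrw, mul_add, mul_add, mul_smul_comm, ← mul_assoc]
        _ = (i X * y) * y ^ (j + 1) + i h * y ^ (j + 1)
              + ((j + 1) • (i h * y ^ (j + 1) + i (derivative h * h) * y ^ j) + y * b)
              - i X * (y * y ^ (j + 1)) := by
            rw [hyX, add_mul, ymul h j]
        _ = (j + 2) • (i h * y ^ (j + 1))
              + ((j + 1) • (i (derivative h * h) * y ^ j) + y * b) := by
            rw [mul_assoc, smul_add, succ_nsmul' (i h * y ^ (j + 1)) (j + 1)]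
            abel
  -- commutator of a top term with i X
  have topcomm : ∀ (j : ℕ) (d : Polynomial F), ∃ b ∈ S j,
      i d * y ^ (j + 1) * i X - i X * (i d * y ^ (j + 1))
        = (j + 1) • (i (d * h) * y ^ j) + b := by
    intro j d
    obtain ⟨b, hbS, hbeq⟩ := Ck j
    refine ⟨i d * b, dS _ _ _ hbS, ?_⟩
    have h1 : i X * (i d * y ^ (j + 1)) = i d * (i X * y ^ (j + 1)) := by
      rw [← mul_assoc, comm_i X d, mul_assoc]
    rw [mul_assoc, h1, ← mul_sub, hbeq, mul_add, mul_smul_comm, ← mul_assoc, ← map_mul]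
  -- commutation with i X lowers degree
  have commS : ∀ (m : ℕ) (b : A), b ∈ S (m + 1) → b * i X - i X * b ∈ S m := by
    intro m b hb
    induction hb using AddSubmonoid.closure_induction with
    | mem a ha =>
      obtain ⟨k, hk, d, rfl⟩ := ha
      match k, hk with
      | 0, _ =>
        rw [pow_zero, mul_one, comm_i d X, sub_self]
        exact zero_mem _
      | (j + 1), hk =>
        obtain ⟨b, hbS, hbeq⟩ := topcomm j d
        rw [hbeq]
        exact add_mem (nsmul_mem (mem_S _ _ _ (by omega)) _)
          (S_mono (by omega) hbS)
    | zero => simpa using zero_mem (S m)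
    | add a b _ _ ha hb =>
      have hre : (a + b) * i X - i X * (a + b)
          = (a * i X - i X * a) + (b * i X - i X * b) := by noncomm_ring
      rw [hre]; exact add_mem ha hb
  -- extraction of the top coefficient
  have EX : ∀ (m : ℕ) (a : A), a ∈ S (m + 1) →
      ∃ d : Polynomial F, ∃ b ∈ S m, a = i d * y ^ m + b := by
    intro m a ha
    induction ha using AddSubmonoid.closure_induction with
    | mem a ha =>
      obtain ⟨k, hk, d, rfl⟩ := ha
      rcases Nat.lt_succ_iff_lt_or_eq.mp hk with hk' | rfl
      · exact ⟨0, i d * y ^ k, mem_S _ _ _ hk', by rw [map_zero, zero_mul, zero_add]⟩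
      · exact ⟨d, 0, zero_mem _, (add_zero _).symm⟩
    | zero => exact ⟨0, 0, zero_mem _, by rw [map_zero, zero_mul, zero_add]⟩
    | add a b _ _ iha ihb =>
      obtain ⟨d1, b1, hb1, rfl⟩ := iha
      obtain ⟨d2, b2, hb2, rfl⟩ := ihb
      exact ⟨d1 + d2, b1 + b2, add_mem hb1 hb2, by rw [map_add, add_mul]; abel⟩
  -- representation of elements of S m by finsupps supported below m
  have REP : ∀ (m : ℕ) (b : A), b ∈ S m →
      ∃ c : ℕ →₀ Polynomial F, (∀ k, m ≤ k → c k = 0) ∧ φ c = b := by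
    intro m b hb
    induction hb using AddSubmonoid.closure_induction with
    | mem a ha =>
      obtain ⟨k, hk, d, rfl⟩ := ha
      refine ⟨Finsupp.single k d, ?_, φ_single k d⟩
      intro k' hk'
      exact Finsupp.single_eq_of_ne' (by omega)
    | zero => exact ⟨0, fun k _ => rfl, φ_zero⟩
    | add a b _ _ iha ihb =>
      obtain ⟨c1, hc1, rfl⟩ := iha
      obtain ⟨c2, hc2, rfl⟩ := ihb
      exact ⟨c1 + c2,
        fun k hk => by rw [Finsupp.add_apply, hc1 k hk, hc2 k hk, add_zero],
        φ_add c1 c2⟩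
  -- every element lies in some S n
  have exS : ∀ c : ℕ →₀ Polynomial F, ∃ n, φ c ∈ S n := by
    intro c
    induction c using Finsupp.induction with
    | zero => exact ⟨0, φ_zero ▸ zero_mem _⟩
    | single_add k d f hkf hd IH =>
      obtain ⟨n, hn⟩ := IH
      refine ⟨max (k + 1) n, ?_⟩
      rw [φ_add, φ_single]
      exact add_mem (mem_S _ _ _ (by omega)) (S_mono (le_max_right _ _) hn)
  -- main induction on degree
  have main : ∀ n : ℕ, ∀ a : A, a ∈ J → a ≠ 0 → a ∈ S (n + 1) →
      ∃ r : Polynomial F, r ≠ 0 ∧ i r ∈ J := by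
    intro n
    induction n with
    | zero =>
      intro a haJ ha0' haS
      obtain ⟨d, b, hbS, hab⟩ := EX 0 a haS
      rw [S0 b hbS, add_zero, pow_zero, mul_one] at hab
      exact ⟨d, fun hd => ha0' (by rw [hab, hd, map_zero]), hab ▸ haJ⟩
    | succ n IH =>
      intro a haJ ha0' haS
      obtain ⟨d, b, hbS, hab⟩ := EX (n + 1) a haS
      by_cases hd : d = 0
      · apply IH a haJ ha0'
        rw [hab, hd, map_zero, zero_mul, zero_add]
        exact hbS
      · have ha'J : a * i X - i X * a ∈ J :=
          J.sub_mem (J.mul_mem_right a (i X) haJ) (J.mul_mem_left (i X) a haJ)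
        obtain ⟨bc, hbcS, hbc⟩ := topcomm n d
        have htS : bc + (b * i X - i X * b) ∈ S n := add_mem hbcS (commS n b hbS)
        have hr0 : ((n + 1) • (d * h) : Polynomial F) ≠ 0 := by
          rw [nsmul_eq_mul]
          exact mul_ne_zero (Nat.cast_ne_zero.mpr (Nat.succ_ne_zero n))
            (mul_ne_zero hd hh)
        have ha'eq : a * i X - i X * a
            = i ((n + 1) • (d * h)) * y ^ n + (bc + (b * i X - i X * b)) := by
          calc a * i X - i X * a
              = (i d * y ^ (n + 1) * i X - i X * (i d * y ^ (n + 1)))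
                + (b * i X - i X * b) := by rw [hab]; noncomm_ring
            _ = ((n + 1) • (i (d * h) * y ^ n) + bc) + (b * i X - i X * b) := by rw [hbc]
            _ = i ((n + 1) • (d * h)) * y ^ n + (bc + (b * i X - i X * b)) := by
                rw [map_nsmul, smul_mul_assoc, add_assoc]
        have ha' : a * i X - i X * a ≠ 0 := by
          intro hz
          have h1 : i ((n + 1) • (d * h)) * y ^ n = -(bc + (b * i X - i X * b)) := by
            rw [ha'eq] at hz
            exact eq_neg_of_add_eq_zero_left hz
          obtain ⟨c, hc, hcφ⟩ := REP n _ (negS n _ htS)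
          have h2 : φ (Finsupp.single n ((n + 1) • (d * h))) = φ c := by
            rw [φ_single, hcφ, h1]
          have h3 := hbij.1 h2
          have h4 : ((n + 1) • (d * h) : Polynomial F) = 0 := by
            have h5 := congrArg (fun c => c n) h3
            simpa [Finsupp.single_eq_same, hc n le_rfl] using h5
          exact hr0 h4
        apply IH _ ha'J ha'
        rw [ha'eq]
        exact add_mem (mem_S _ _ _ (Nat.lt_succ_self n)) (S_mono (Nat.le_succ n) htS)
  obtain ⟨c0, hc0⟩ := hbij.2 a0
  obtain ⟨n, hn⟩ := exS c0
  exact main n a0 ha0J ha0 (S_mono (Nat.le_succ n) (hc0 ▸ hn))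
end

section
/- Let A be an associative unital F-algebra and let V, W be finite-dimensional irreducible A-modules. Then V ≅ W as A-modules if and only if Ann_A(V) = Ann_A(W). -/
set_option synthInstance.maxHeartbeats 1000000
set_option maxHeartbeats 1000000

section aux

variable {F A V W : Type*} [Field F] [Ring A] [Algebra F A]
    [AddCommGroup V] [Module A V] [Module F V] [IsScalarTower F A V]

/-- The action of `a : A` commutes with the `F`-scalar action. -/
lemma aux_smul_comm (a : A) (c : F) (v : V) : a • (c • v) = c • (a • v) := by
  rw [← algebraMap_smul A c v, ← mul_smul, ← Algebra.commutes, mul_smul, algebraMap_smul]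

/-- If `a` kills a spanning family (e.g. a basis), it kills everything. -/
lemma aux_smul_eq_zero {ι : Type*} (b : Module.Basis ι F V) (a : A)
    (hb : ∀ i, a • b i = 0) (v : V) : a • v = 0 := by
  let L : V →ₗ[F] V :=
    { toFun := fun v => a • v
      map_add' := fun x y => smul_add a x y
      map_smul' := fun c x => aux_smul_comm a c x }
  have hL : L = 0 := b.ext fun i => hb i
  have := LinearMap.congr_fun hL v
  exact this

/-- A finite power of a simple module is semisimple. -/
lemma aux_semisimple_pi {ι : Type*} [Finite ι] [IsSimpleModule A V] :
    IsSemisimpleModule A (ι → V) := by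
  classical
  have hV : IsSemisimpleModule A V := by
    rw [← sSup_simples_eq_top_iff_isSemisimpleModule]
    exact le_antisymm le_top (le_sSup (IsSimpleModule.congr Submodule.topEquiv))
  refine isSemisimpleModule_of_isSemisimpleModule_submodule'
    (p := fun i : ι => LinearMap.range (LinearMap.single A (fun _ : ι => V) i))
    (fun i => ?_) (LinearMap.iSup_range_single A _)
  exact IsSemisimpleModule.congr
    (LinearEquiv.ofInjective _ (Pi.single_injective (M := fun _ : ι => V) i)).symm

end aux

/-- Finite-dimensional irreducible modules over an `F`-algebra are isomorphic
iff they have the same annihilator. -/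
theorem stmt10 {F A V W : Type*} [Field F] [Ring A] [Algebra F A]
    [AddCommGroup V] [Module A V] [Module F V] [IsScalarTower F A V]
    [AddCommGroup W] [Module A W] [Module F W] [IsScalarTower F A W]
    [IsSimpleModule A V] [IsSimpleModule A W]
    [FiniteDimensional F V] [FiniteDimensional F W] :
    Nonempty (V ≃ₗ[A] W) ↔
      ∀ a : A, (∀ v : V, a • v = 0) ↔ (∀ w : W, a • w = 0) := by
  constructor
  · rintro ⟨e⟩ a
    constructor
    · intro hv w
      have : a • e.symm w = 0 := hv _
      have := congrArg e this
      simpa using this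
    · intro hw v
      have : a • e v = 0 := hw _
      have := congrArg e.symm this
      simpa using this
  · intro h
    classical
    have : Nontrivial W := IsSimpleModule.nontrivial A W
    obtain ⟨w, hw⟩ := exists_ne (0 : W)
    set n := Module.finrank F V
    let b : Module.Basis (Fin n) F V := Module.finBasis F V
    -- the map a ↦ (a • b i)_i
    let f : A →ₗ[A] (Fin n → V) :=
      LinearMap.pi fun i => LinearMap.toSpanSingleton A V (b i)
    let g : A →ₗ[A] W := LinearMap.toSpanSingleton A W w
    have hker : LinearMap.ker f ≤ LinearMap.ker g := by
      intro a ha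
      have hb : ∀ i, a • b i = 0 := fun i => congrFun (by exact ha) i
      have hv : ∀ v : V, a • v = 0 := aux_smul_eq_zero b a hb
      have hwall : ∀ w' : W, a • w' = 0 := (h a).mp hv
      simpa [g, LinearMap.toSpanSingleton] using hwall w
    -- induced map from range f onto W
    let ψ : LinearMap.range f →ₗ[A] W :=
      (Submodule.liftQ (LinearMap.ker f) g hker).comp
        f.quotKerEquivRange.symm.toLinearMap
    have hψ1 : ψ ⟨f 1, LinearMap.mem_range_self f 1⟩ = w := by
      have := f.quotKerEquivRange_symm_apply_image 1 (LinearMap.mem_range_self f 1)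
      simp only [ψ, LinearMap.comp_apply, LinearEquiv.coe_coe, this]
      simpa [g, LinearMap.toSpanSingleton] using (one_smul A w)
    have hψ : ψ ≠ 0 := fun h0 => hw (by rw [← hψ1, h0]; rfl)
    -- range f is semisimple
    have : IsSemisimpleModule A (Fin n → V) := aux_semisimple_pi
    have hss : IsSemisimpleModule A (LinearMap.range f) := inferInstance
    -- find a simple submodule not killed by ψ
    have htop : sSup { m : Submodule A (LinearMap.range f) | IsSimpleModule A m } = ⊤ :=
      IsSemisimpleModule.sSup_simples_eq_top A _
    have : ∃ S : Submodule A (LinearMap.range f), IsSimpleModule A S ∧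
        ψ.comp S.subtype ≠ 0 := by
      by_contra hc
      push_neg at hc
      have hle : ∀ S ∈ { m : Submodule A (LinearMap.range f) | IsSimpleModule A m },
          S ≤ LinearMap.ker ψ := by
        intro S hS
        intro x hx
        have := hc S hS
        have : ψ.comp S.subtype ⟨x, hx⟩ = 0 := by rw [this]; rfl
        simpa using this
      have : (⊤ : Submodule A (LinearMap.range f)) ≤ LinearMap.ker ψ := by
        rw [← htop]; exact sSup_le hle
      exact hψ (LinearMap.ext fun x => this trivial)
    obtain ⟨S, hSsimple, hSne⟩ := this
    haveI := hSsimple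
    -- ψ restricted to S : S → W is a nonzero map between simple modules
    have hbijSW : Function.Bijective (ψ.comp S.subtype) := by
      clear_value ψ
      exact LinearMap.bijective_of_ne_zero (R := A) (M := S) (N := W) (f := ψ.comp S.subtype) hSne
    let eSW : S ≃ₗ[A] W := LinearEquiv.ofBijective _ hbijSW
    -- inclusion of S into (Fin n → V), composed with a suitable projection
    let j : S →ₗ[A] (Fin n → V) := (LinearMap.range f).subtype.comp S.subtype
    have hjinj : Function.Injective j :=
      (Submodule.injective_subtype _).comp (Submodule.injective_subtype _)
    have : Nontrivial ↥S := IsSimpleModule.nontrivial A ↥S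
    obtain ⟨s, hs⟩ := exists_ne (0 : S)
    have hjs : j s ≠ 0 := fun h0 => hs (hjinj (by simpa using h0))
    obtain ⟨i, hi⟩ : ∃ i, j s i ≠ 0 := by
      by_contra hc; push_neg at hc; exact hjs (funext hc)
    let π : S →ₗ[A] V := (LinearMap.proj i).comp j
    have hπ : π ≠ 0 := fun h0 => hi (by
      have : π s = 0 := by rw [h0]; rfl
      simpa [π] using this)
    have hbijSV : Function.Bijective π := by
      clear_value π
      exact LinearMap.bijective_of_ne_zero (R := A) (M := S) (N := V) (f := π) hπ
    let eSV : S ≃ₗ[A] V := LinearEquiv.ofBijective _ hbijSV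
    exact ⟨eSV.symm.trans eSW⟩
end

section
/- Let F be a field, h ∈ F[x], δ the derivation of F[x] with δ(r) = r′h, and λ ∈ F a root of h. Then for every k ≥ 1, δ^k(x) ≡ h′(x)^{k−1} h(x) modulo h(x)². In particular, if char F = p > 0, then δ^p(x)/h(x) evaluated at λ equals h′(λ)^{p−1}. -/
open Polynomial

/-- For `δ(r) = r′h` on `F[x]`: `δ^k(x) ≡ (h′)^{k−1} h (mod h²)` for all `k ≥ 1`;
in particular, in characteristic `p`, `δ^p(x)/h(x)` evaluated at a root `λ` of `h`
equals `h′(λ)^{p−1}`. -/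
theorem stmt14 {F : Type*} [Field F] (h : Polynomial F) (lam : F)
    (hlam : h.eval lam = 0) :
    (∀ k : ℕ, 1 ≤ k → ∃ f : Polynomial F,
      (fun r : Polynomial F => derivative r * h)^[k] X =
        (derivative h) ^ (k - 1) * h + f * h ^ 2) ∧
    (∀ p : ℕ, p.Prime → CharP F p → ∃ g : Polynomial F,
      (fun r : Polynomial F => derivative r * h)^[p] X = g * h ∧
        g.eval lam = ((derivative h).eval lam) ^ (p - 1)) := by
  have main : ∀ k : ℕ, 1 ≤ k → ∃ f : Polynomial F,
      (fun r : Polynomial F => derivative r * h)^[k] X =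
        (derivative h) ^ (k - 1) * h + f * h ^ 2 := by
    intro k hk
    induction k, hk using Nat.le_induction with
    | base =>
      refine ⟨0, ?_⟩
      simp
    | succ k hk ih =>
      obtain ⟨f, hf⟩ := ih
      refine ⟨Polynomial.derivative ((derivative h) ^ (k - 1)) +
        derivative f * h + 2 * f * derivative h, ?_⟩
      rw [Function.iterate_succ_apply', hf]
      simp only [derivative_add, derivative_mul, derivative_pow]
      have hpow : (derivative h) ^ (k - 1) * derivative h = (derivative h) ^ k := by
        rw [← pow_succ, Nat.sub_add_cancel hk]
      have : k + 1 - 1 = k := rfl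
      rw [this]
      rw [← hpow]
      simp only [map_ofNat, Polynomial.C_eq_natCast]
      push_cast
      ring
  refine ⟨main, ?_⟩
  intro p hp _
  obtain ⟨f, hf⟩ := main p hp.one_lt.le
  refine ⟨(derivative h) ^ (p - 1) + f * h, ?_, ?_⟩
  · rw [hf]; ring
  · simp [hlam]
end

section
/- Let F be a field of characteristic p > 0 and α, β ∈ F. Then the polynomial g(t) = t^p − α^{p−1} t − β ∈ F[t] either has a root in F or is irreducible over F. -/
open Polynomial

private lemma multiset_sum_aux {K : Type*} [Field K] (μ a : K) :
    ∀ (t : Multiset K), (∀ x ∈ t, ∃ j : ℕ, x = μ + (j : K) * a) →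
      ∃ n : ℕ, t.sum = (Multiset.card t : K) * μ + (n : K) * a := by
  intro t
  induction t using Multiset.induction with
  | empty => intro _; exact ⟨0, by simp⟩
  | cons x s ih =>
    intro h
    obtain ⟨j, hj⟩ := h x (Multiset.mem_cons_self _ _)
    obtain ⟨n, hn⟩ := ih (fun y hy => h y (Multiset.mem_cons_of_mem hy))
    refine ⟨j + n, ?_⟩
    rw [Multiset.sum_cons, hn, hj, Multiset.card_cons]
    push_cast
    ring

/-- In characteristic `p > 0`, the polynomial `t^p − α^{p−1} t − β` either has a root
in `F` or is irreducible over `F`. -/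
theorem stmt17 {F : Type*} [Field F] (p : ℕ) (hp : p.Prime) [CharP F p] (α β : F) :
    (∃ t : F, eval t (X ^ p - C (α ^ (p - 1)) * X - C β) = 0) ∨
      Irreducible (X ^ p - C (α ^ (p - 1)) * X - C β) := by
  haveI := Fact.mk hp
  set g : F[X] := X ^ p - C (α ^ (p - 1)) * X - C β with hgdef
  by_cases hroot : ∃ t : F, eval t g = 0
  · exact Or.inl hroot
  right
  push_neg at hroot
  have hp0 : p ≠ 0 := hp.ne_zero
  have hp1 : 1 ≤ p := hp.one_lt.le
  -- basic facts about g
  have hp2 : 2 ≤ p := hp.two_le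
  have hgm : g.Monic := by
    have h1 : (C (α ^ (p - 1)) * X + C β).degree < (X ^ p : F[X]).degree := by
      rw [degree_X_pow]
      exact lt_of_le_of_lt (degree_linear_le) (by exact_mod_cast hp.one_lt)
    have hg' : g = X ^ p - (C (α ^ (p - 1)) * X + C β) := by ring
    rw [hg']
    exact (monic_X_pow (R := F) (n := p)).sub_of_left h1
  have hgdeg : g.natDegree = p := by
    have hg' : g = X ^ p - (C (α ^ (p - 1)) * X + C β) := by ring
    rw [hg', natDegree_sub_eq_left_of_natDegree_lt, natDegree_X_pow]
    rw [natDegree_X_pow]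
    exact lt_of_le_of_lt (natDegree_linear_le) hp.one_lt
  have hg0 : g ≠ 0 := hgm.ne_zero
  -- the algebraic closure
  set K := AlgebraicClosure F
  set φ : F →+* K := algebraMap F K with hφdef
  haveI : CharP K p := charP_of_injective_algebraMap φ.injective p
  set A : K := φ α with hAdef
  set gK : K[X] := g.map φ with hgKdef
  have hgKm : gK.Monic := hgm.map φ
  have hgK : gK = X ^ p - C (A ^ (p - 1)) * X - C (φ β) := by
    simp [hgKdef, hgdef, Polynomial.map_sub, Polynomial.map_pow, Polynomial.map_mul, map_pow]
    rfl
  have hgKdeg : gK.natDegree = p := by rw [hgKdef, hgm.natDegree_map, hgdeg]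
  have hgK0 : gK ≠ 0 := hgKm.ne_zero
  -- a root μ of gK in K
  obtain ⟨μ, hμ⟩ : ∃ x : K, IsRoot gK x := by
    apply IsAlgClosed.exists_root
    rw [degree_eq_natDegree hgK0, hgKdeg]
    exact_mod_cast hp0
  have hμ' : μ ^ p - A ^ (p - 1) * μ - φ β = 0 := by
    have := hμ
    rw [IsRoot, hgK] at this
    simpa using this
  -- Fermat's little theorem in K
  have hjp : ∀ j : ℕ, (j : K) ^ p = (j : K) := by
    intro j
    rw [← Nat.cast_pow]
    exact CharP.natCast_eq_natCast' K p
      ((ZMod.natCast_eq_natCast_iff _ _ _).mp (by push_cast [ZMod.pow_card]; rfl))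
  have hApow : A ^ (p - 1) * A = A ^ p := by
    rw [← pow_succ, Nat.sub_add_cancel hp1]
  -- all μ + j*A are roots of gK
  have hrootj : ∀ j : ℕ, IsRoot gK (μ + (j : K) * A) := by
    intro j
    rw [IsRoot, hgK]
    simp only [eval_sub, eval_pow, eval_mul, eval_C, eval_X]
    rw [add_pow_char, mul_pow, hjp]
    linear_combination hμ' - (j : K) * hApow
  -- the factorization of gK
  have hfact : gK = ∏ j ∈ Finset.range p, (X - C (μ + (j : K) * A)) := by
    by_cases hα : α = 0
    · have hA0 : A = 0 := by rw [hAdef, hα, map_zero]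
      have hβ : μ ^ p = φ β := by
        have h0 : A ^ (p - 1) = 0 := by rw [hA0, zero_pow (by omega : p - 1 ≠ 0)]
        linear_combination hμ' + μ * h0
      have hprod : (∏ j ∈ Finset.range p, (X - C (μ + (j : K) * A))) = (X - C μ) ^ p := by
        simp [hA0]
      rw [hprod, sub_pow_char, ← map_pow, hβ, hgK, hA0,
        zero_pow (by omega : p - 1 ≠ 0), map_zero]
      ring
    · have hA0 : A ≠ 0 := fun h => hα (φ.injective (by simpa [hAdef] using h))
      have hinj : ∀ i ∈ Finset.range p, ∀ j ∈ Finset.range p, i ≠ j →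
          μ + (i : K) * A ≠ μ + (j : K) * A := by
        intro i hi j hj hij h
        have : (i : K) = (j : K) := by
          rw [add_right_inj, mul_eq_mul_right_iff] at h
          rcases h with h | h
          · exact h
          · exact absurd h hA0
        have := (CharP.natCast_eq_natCast K p).mp this
        rw [Nat.ModEq] at this
        rw [Nat.mod_eq_of_lt (Finset.mem_range.mp hi), Nat.mod_eq_of_lt (Finset.mem_range.mp hj)]
          at this
        exact hij this
      have hdvd : (∏ j ∈ Finset.range p, (X - C (μ + (j : K) * A))) ∣ gK := by
        apply Finset.prod_dvd_of_coprime
        · intro i hi j hj hij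
          exact isCoprime_X_sub_C_of_isUnit_sub
            (isUnit_iff_ne_zero.mpr (sub_ne_zero.mpr (hinj i hi j hj hij)))
        · intro j _
          rw [dvd_iff_isRoot]
          exact hrootj j
      have hPm : (∏ j ∈ Finset.range p, (X - C (μ + (j : K) * A))).Monic :=
        monic_prod_of_monic _ _ fun j _ => monic_X_sub_C _
      have hPdeg : (∏ j ∈ Finset.range p, (X - C (μ + (j : K) * A))).natDegree = p := by
        rw [natDegree_prod _ _ fun j _ => X_sub_C_ne_zero _,
          Finset.sum_congr rfl (fun j _ => natDegree_X_sub_C _)]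
        simp
      exact eq_of_monic_of_dvd_of_natDegree_le hPm hgKm hdvd (le_of_eq (hgKdeg.trans hPdeg.symm))
  -- every root of gK has the form μ + j * A
  have hmem : ∀ x : K, IsRoot gK x → ∃ j : ℕ, x = μ + (j : K) * A := by
    intro x hx
    rw [IsRoot, hfact, eval_prod, Finset.prod_eq_zero_iff] at hx
    obtain ⟨j, _, hj⟩ := hx
    simp only [eval_sub, eval_X, eval_C, sub_eq_zero] at hj
    exact ⟨j, hj⟩
  -- now prove irreducibility
  by_contra hirr
  obtain ⟨q, hqm, hqirr, hqdvd⟩ := g.exists_monic_irreducible_factor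
    (not_isUnit_of_natDegree_pos g (by omega))
  have hqdeg : q.natDegree ≤ p := hgdeg ▸ natDegree_le_of_dvd hqdvd hg0
  have hqpos : 0 < q.natDegree := hqirr.natDegree_pos
  rcases eq_or_lt_of_le hqdeg with heq | hlt
  · exact hirr (eq_of_monic_of_dvd_of_natDegree_le hqm hgm hqdvd (hgdeg ▸ heq.ge) ▸ hqirr)
  -- q has degree m with 0 < m < p : derive a root of g in F, contradiction
  set m := q.natDegree with hmdef
  set qK : K[X] := q.map φ with hqKdef
  have hqKm : qK.Monic := hqm.map φ
  have hqKdvd : qK ∣ gK := Polynomial.map_dvd φ hqdvd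
  have hqKdeg : qK.natDegree = m := hqm.natDegree_map φ
  have hsplits : qK.Splits := IsAlgClosed.splits qK
  have hcard : Multiset.card qK.roots = m := by
    rw [← hqKdeg, splits_iff_card_roots.mp hsplits]
  have hsub : ∀ x ∈ qK.roots, ∃ j : ℕ, x = μ + (j : K) * A := by
    intro x hx
    apply hmem
    obtain ⟨c, hc⟩ := hqKdvd
    have hx' : IsRoot qK x := isRoot_of_mem_roots hx
    rw [IsRoot, hc, eval_mul, hx'.eq_zero, zero_mul]
  obtain ⟨n, hn⟩ := multiset_sum_aux μ A qK.roots hsub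
  rw [hcard] at hn
  have hnext : qK.nextCoeff = -qK.roots.sum :=
    hsplits.nextCoeff_eq_neg_sum_roots_of_monic hqKm
  have hnextmap : qK.nextCoeff = φ q.nextCoeff := nextCoeff_map φ.injective q
  have hmne : (m : F) ≠ 0 := by
    rw [Ne, CharP.cast_eq_zero_iff F p]
    intro hdvd'
    have := Nat.le_of_dvd hqpos hdvd'
    omega
  have hkey : φ (m : F) * μ = φ (-q.nextCoeff - (n : F) * α) := by
    rw [map_sub, map_neg, map_mul, map_natCast, map_natCast]
    have : (m : K) * μ + (n : K) * A = -(φ q.nextCoeff) := by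
      rw [← hnextmap, hnext, ← hn]; ring
    linear_combination this
  have hmK : φ ((m : ℕ) : F) ≠ 0 := fun h => hmne (φ.injective (by rw [h, map_zero]))
  have hμF : μ = φ ((-q.nextCoeff - (n : F) * α) / (m : F)) := by
    rw [map_div₀, eq_div_iff hmK, mul_comm]
    exact hkey
  apply hroot ((-q.nextCoeff - (n : F) * α) / (m : F))
  apply φ.injective
  rw [map_zero, ← eval₂_at_apply, ← eval_map, ← hμF]
  exact hμ
end

section
/- Let A be a ring, D a subring of A, and M an A-module. Suppose M is generated over A by an element u with m^k u = 0 for an ideal m of D and some k ≥ 1, where A = D[y; δ] is an Ore extension of D by a derivation δ. Then every element of M is annihilated by some power of m, i.e., M = M^m := {v ∈ M : m^n v = 0 for some n}. -/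
/-- If `M = A·u` for an Ore extension `A = D[y; δ]` and `m^k u = 0` for an ideal `m`
of `D` and some `k ≥ 1`, then every element of `M` is annihilated by some power
of `m`. -/
theorem stmt19 {D A M : Type*} [CommRing D] [Ring A]
    [AddCommGroup M] [Module A M]
    (δ : D → D) (hadd : ∀ a b, δ (a + b) = δ a + δ b)
    (hleib : ∀ a b, δ (a * b) = δ a * b + a * δ b)
    (i : D →+* A) (y : A)
    (hrel : ∀ r : D, y * i r = i r * y + i (δ r))
    (hbasis : Function.Bijective fun c : ℕ →₀ D => c.sum fun n d => i d * y ^ n)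
    (m : Ideal D) (u : M)
    (hgen : ∀ v : M, ∃ a : A, a • u = v)
    (k : ℕ) (hk : 1 ≤ k) (hann : ∀ r ∈ m ^ k, i r • u = 0) :
    ∀ v : M, ∃ n : ℕ, ∀ r ∈ m ^ n, i r • v = 0 := by
  -- δ maps m^(ℓ+1) into m^ℓ
  have hδpow : ∀ ℓ : ℕ, ∀ r ∈ m ^ (ℓ + 1), δ r ∈ m ^ ℓ := by
    intro ℓ
    induction ℓ with
    | zero => intro r _; simp
    | succ ℓ ih =>
      intro r hr
      rw [pow_succ] at hr
      refine Submodule.mul_induction_on hr ?_ ?_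
      · intro a ha b hb
        rw [hleib]
        refine add_mem ?_ ?_
        · rw [pow_succ]
          exact Ideal.mul_mem_mul (ih a ha) hb
        · exact Ideal.mul_mem_right (δ b) _ ha
      · intro x y hx hy
        rw [hadd]
        exact add_mem hx hy
  -- main lemma: m^(n+k) annihilates y^n • u
  have hmain : ∀ n : ℕ, ∀ r ∈ m ^ (n + k), i r • (y ^ n • u) = 0 := by
    intro n
    induction n with
    | zero =>
      intro r hr
      simpa using hann r (by simpa using hr)
    | succ n ih =>
      intro r hr
      have h1 : i r • (y ^ (n + 1) • u) = (i r * y) • (y ^ n • u) := by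
        rw [pow_succ', smul_smul, smul_smul, mul_assoc]
      have h2 : i r * y = y * i r - i (δ r) := eq_sub_of_add_eq (hrel r).symm
      have hr' : r ∈ m ^ (n + k) :=
        Ideal.pow_le_pow_right (by omega) hr
      have hδr : δ r ∈ m ^ (n + k) := by
        apply hδpow
        have : n + 1 + k = n + k + 1 := by omega
        rwa [this] at hr
      rw [h1, h2, sub_smul, mul_smul, ih r hr', ih (δ r) hδr, smul_zero, sub_zero]
  intro v
  obtain ⟨a, ha⟩ := hgen v
  obtain ⟨c, hc⟩ := hbasis.2 a
  refine ⟨c.support.sup id + k, ?_⟩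
  intro r hr
  rw [← ha, ← hc]
  simp only [Finsupp.sum]
  rw [Finset.sum_smul, Finset.smul_sum]
  refine Finset.sum_eq_zero fun n hn => ?_
  have key : i r • ((i (c n) * y ^ n) • u) = i (r * c n) • (y ^ n • u) := by
    rw [smul_smul, ← mul_assoc, ← map_mul, smul_smul]
  rw [key]
  apply hmain n
  have hmem : r * c n ∈ m ^ (c.support.sup id + k) := Ideal.mul_mem_right _ _ hr
  refine Ideal.pow_le_pow_right ?_ hmem
  have := Finset.le_sup (f := id) hn
  simp only [id] at this
  omega
end
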